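/- Let (Q,B) be a Steiner quadruple system SQS(v) on Q = Z_v, let F = {F_0,...,F_{v-2}} and F' = {F'_0,...,F'_{v-2}} be one-factorizations of K_v on Z_v, and let α be a permutation of {0,...,v-2}. Define B' on Z_v × Z_2 by: (i) for each {x1,x2,x3,x4} ∈ B, include {(x1,0),(x2,0),(x3,0),(x4,0)} and {(x1,1),(x2,1),(x3,1),(x4,1)}; (ii) for each i, each {x1,x2} ∈ F_i and each {y1,y2} ∈ F'_{α(i)}, include {(x1,0),(x2,0),(y1,1),(y2,1)}. Then (Z_v × Z_2, B') is a Steiner quadruple system SQS(2v). -/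
import Mathlib


/-- A Steiner quadruple system on the point set `α`. -/
def IsSQS {α : Type} (B : Set (Finset α)) : Prop :=
  (∀ b ∈ B, b.card = 4) ∧ ∀ t : Finset α, t.card = 3 → ∃! b, b ∈ B ∧ t ⊆ b

/-- A one-factorization of `K_v` on the vertex set `Z_v`: `v - 1` perfect matchings
partitioning all 2-subsets. -/
def IsOneFactorization (v : ℕ) (F : Fin (v - 1) → Set (Finset (ZMod v))) : Prop :=
  (∀ i, (∀ p ∈ F i, p.card = 2) ∧ ((F i).Pairwise fun p q => Disjoint p q) ∧
    ∀ x : ZMod v, ∃ p ∈ F i, x ∈ p) ∧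
  ∀ p : Finset (ZMod v), p.card = 2 → ∃! i, p ∈ F i

/-- The blocks of the DB (doubling) Construction on `Z_v × Z_2`. -/
def dbBlocks (v : ℕ) (B : Set (Finset (ZMod v)))
    (F F' : Fin (v - 1) → Set (Finset (ZMod v))) (α : Equiv.Perm (Fin (v - 1))) :
    Set (Finset (ZMod v × ZMod 2)) :=
  { q | (∃ b ∈ B, q = b.image fun x => (x, (0 : ZMod 2))) ∨
        (∃ b ∈ B, q = b.image fun x => (x, (1 : ZMod 2))) ∨
        (∃ i, ∃ p ∈ F i, ∃ p' ∈ F' (α i),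
          q = (p.image fun x => (x, (0 : ZMod 2))) ∪ (p'.image fun x => (x, (1 : ZMod 2)))) }

private lemma zmod2_em (c : ZMod 2) : c = 0 ∨ c = 1 := by revert c; decide

private lemma zmod2_ne : (0 : ZMod 2) ≠ 1 := by decide

private lemma mem_img {γ : Type} [DecidableEq γ] {s : Finset γ} {c : ZMod 2}
    {z : γ × ZMod 2} : z ∈ s.image (fun x => (x, c)) ↔ z.1 ∈ s ∧ z.2 = c := by
  constructor
  · intro h
    obtain ⟨x, hx, he⟩ := Finset.mem_image.mp h
    subst he; exact ⟨hx, rfl⟩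
  · rintro ⟨h1, h2⟩
    exact Finset.mem_image.mpr ⟨z.1, h1, Prod.ext rfl h2.symm⟩

private lemma card_img {γ : Type} [DecidableEq γ] (s : Finset γ) (c : ZMod 2) :
    (s.image fun x => (x, c)).card = s.card :=
  Finset.card_image_of_injective _ (fun _ _ h => congrArg Prod.fst h)

/-- The DB Construction applied to an SQS(v), two one-factorizations of `K_v` and a
permutation `α` yields a Steiner quadruple system SQS(2v) on `Z_v × Z_2`. -/
theorem db_construction_sqs (v : ℕ) (hv : Even v)
    (B : Set (Finset (ZMod v))) (hB : IsSQS B)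
    (F F' : Fin (v - 1) → Set (Finset (ZMod v)))
    (hF : IsOneFactorization v F) (hF' : IsOneFactorization v F')
    (α : Equiv.Perm (Fin (v - 1))) :
    IsSQS (dbBlocks v B F F' α) := by
  classical
  constructor
  · intro q hq
    simp only [dbBlocks, Set.mem_setOf_eq] at hq
    rcases hq with ⟨b, hb, rfl⟩ | ⟨b, hb, rfl⟩ | ⟨i, p, hp, p', hp', rfl⟩
    · rw [card_img]; exact hB.1 b hb
    · rw [card_img]; exact hB.1 b hb
    · have hd : Disjoint (p.image fun x => (x, (0 : ZMod 2)))
          (p'.image fun x => (x, (1 : ZMod 2))) := by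
        rw [Finset.disjoint_left]
        intro z hz hz'
        exact zmod2_ne ((mem_img.mp hz).2.symm.trans (mem_img.mp hz').2)
      rw [Finset.card_union_of_disjoint hd, card_img, card_img,
        (hF.1 i).1 p hp, (hF'.1 (α i)).1 p' hp']
  · intro t ht
    set t0 := t.filter (fun z => z.2 = 0) with ht0def
    set t1 := t.filter (fun z => z.2 = 1) with ht1def
    have hc0 : ∀ z ∈ t0, z.2 = 0 := fun z hz => (Finset.mem_filter.mp hz).2
    have hc1 : ∀ z ∈ t1, z.2 = 1 := fun z hz => (Finset.mem_filter.mp hz).2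
    have ht0t : t0 ⊆ t := Finset.filter_subset _ _
    have ht1t : t1 ⊆ t := Finset.filter_subset _ _
    have hsplit : ∀ z ∈ t, z ∈ t0 ∨ z ∈ t1 := by
      intro z hz
      rcases zmod2_em z.2 with h | h
      · exact Or.inl (Finset.mem_filter.mpr ⟨hz, h⟩)
      · exact Or.inr (Finset.mem_filter.mpr ⟨hz, h⟩)
    have hcard : t0.card + t1.card = 3 := by
      have hdisj : Disjoint t0 t1 := by
        rw [Finset.disjoint_left]
        intro z hz hz'
        exact zmod2_ne ((hc0 z hz).symm.trans (hc1 z hz'))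
      have hunion : t0 ∪ t1 = t :=
        Finset.Subset.antisymm (Finset.union_subset ht0t ht1t)
          (fun z hz => Finset.mem_union.mpr (hsplit z hz))
      rw [← ht, ← hunion, Finset.card_union_of_disjoint hdisj]
    set s0 := t0.image Prod.fst with hs0def
    set s1 := t1.image Prod.fst with hs1def
    have hinj : ∀ (s : Finset (ZMod v × ZMod 2)) (c : ZMod 2), (∀ z ∈ s, z.2 = c) →
        (s.image Prod.fst).card = s.card := by
      intro s c hc
      apply Finset.card_image_of_injOn
      intro a ha b hb hab
      exact Prod.ext hab ((hc a ha).trans (hc b hb).symm)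
    have hs0card : s0.card = t0.card := hinj _ _ hc0
    have hs1card : s1.card = t1.card := hinj _ _ hc1
    have hmem0 : ∀ x ∈ s0, (x, (0 : ZMod 2)) ∈ t0 := by
      intro x hx
      obtain ⟨z, hz, he⟩ := Finset.mem_image.mp hx
      have hz2 := hc0 z hz
      have : z = (x, (0 : ZMod 2)) := Prod.ext he hz2
      exact this ▸ hz
    have hmem1 : ∀ x ∈ s1, (x, (1 : ZMod 2)) ∈ t1 := by
      intro x hx
      obtain ⟨z, hz, he⟩ := Finset.mem_image.mp hx
      have hz2 := hc1 z hz
      have : z = (x, (1 : ZMod 2)) := Prod.ext he hz2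
      exact this ▸ hz
    have hcases : (t0.card = 3 ∧ t1.card = 0) ∨ (t0.card = 2 ∧ t1.card = 1) ∨
        (t0.card = 1 ∧ t1.card = 2) ∨ (t0.card = 0 ∧ t1.card = 3) := by omega
    rcases hcases with ⟨h0, h1⟩ | ⟨h0, h1⟩ | ⟨h0, h1⟩ | ⟨h0, h1⟩
    · -- all three points in level 0
      have hall0 : ∀ z ∈ t, z.2 = 0 := by
        intro z hz
        rcases hsplit z hz with h | h
        · exact hc0 z h
        · exact absurd h (by simp [Finset.card_eq_zero.mp h1])
      have ht0eq : t0 = t := Finset.filter_eq_self.mpr hall0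
      obtain ⟨b, ⟨hbB, hbs⟩, hbu⟩ := hB.2 s0 (by rw [hs0card, h0])
      refine ⟨b.image (fun x => (x, (0 : ZMod 2))),
        ⟨Or.inl ⟨b, hbB, rfl⟩, ?_⟩, ?_⟩
      · intro z hz
        refine mem_img.mpr ⟨hbs ?_, hall0 z hz⟩
        exact Finset.mem_image_of_mem _ (ht0eq ▸ hz)
      · rintro q' ⟨hq', hsub⟩
        obtain ⟨z, hz⟩ := Finset.card_pos.mp (by omega : 0 < t.card)
        rcases hq' with ⟨b2, hb2, rfl⟩ | ⟨b2, hb2, rfl⟩ | ⟨i, p, hp, p', hp', rfl⟩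
        · have hsb2 : s0 ⊆ b2 := by
            intro x hx
            exact (mem_img.mp (hsub (ht0t (hmem0 x hx)))).1
          rw [hbu b2 ⟨hb2, hsb2⟩]
        · exact absurd ((hall0 z hz).symm.trans (mem_img.mp (hsub hz)).2) zmod2_ne
        · exfalso
          have hsp : s0 ⊆ p := by
            intro x hx
            rcases Finset.mem_union.mp (hsub (ht0t (hmem0 x hx))) with h' | h'
            · exact (mem_img.mp h').1
            · exact absurd (mem_img.mp h').2 zmod2_ne
          have hle := Finset.card_le_card hsp
          have hp2 := (hF.1 i).1 p hp
          omega
    · -- two points in level 0, one in level 1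
      have hs0c : s0.card = 2 := by rw [hs0card, h0]
      have hs1c : s1.card = 1 := by rw [hs1card, h1]
      obtain ⟨y, hy⟩ := Finset.card_eq_one.mp hs1c
      have hyt : (y, (1 : ZMod 2)) ∈ t1 := hmem1 y (by rw [hy]; exact Finset.mem_singleton_self y)
      obtain ⟨i, hi, hiu⟩ := hF.2 s0 hs0c
      obtain ⟨p', hp', hyp'⟩ := (hF'.1 (α i)).2.2 y
      refine ⟨_, ⟨Or.inr (Or.inr ⟨i, s0, hi, p', hp', rfl⟩), ?_⟩, ?_⟩
      · intro z hz
        rcases hsplit z hz with h' | h'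
        · exact Finset.mem_union_left _
            (mem_img.mpr ⟨Finset.mem_image_of_mem _ h', hc0 z h'⟩)
        · refine Finset.mem_union_right _ (mem_img.mpr ⟨?_, hc1 z h'⟩)
          have hz1 : z.1 ∈ s1 := Finset.mem_image_of_mem _ h'
          rw [hy, Finset.mem_singleton] at hz1
          rw [hz1]; exact hyp'
      · rintro q' ⟨hq', hsub⟩
        rcases hq' with ⟨b2, hb2, rfl⟩ | ⟨b2, hb2, rfl⟩ | ⟨i2, p2, hp2, p2', hp2', rfl⟩
        · exact absurd ((mem_img.mp (hsub (ht1t hyt))).2).symm zmod2_ne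
        · exfalso
          obtain ⟨z, hz0⟩ := Finset.card_pos.mp (by omega : 0 < t0.card)
          exact absurd ((hc0 z hz0).symm.trans (mem_img.mp (hsub (ht0t hz0))).2) zmod2_ne
        · have hsp : s0 ⊆ p2 := by
            intro x hx
            rcases Finset.mem_union.mp (hsub (ht0t (hmem0 x hx))) with h' | h'
            · exact (mem_img.mp h').1
            · exact absurd (mem_img.mp h').2 zmod2_ne
          have hp2c : p2.card = 2 := (hF.1 i2).1 p2 hp2
          have hps : p2 = s0 := (Finset.eq_of_subset_of_card_le hsp (by omega)).symm
          have hi2 : s0 ∈ F i2 := hps ▸ hp2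
          have hii : i2 = i := hiu i2 hi2
          have hyp2' : y ∈ p2' := by
            rcases Finset.mem_union.mp (hsub (ht1t hyt)) with h' | h'
            · exact absurd ((mem_img.mp h').2).symm zmod2_ne
            · exact (mem_img.mp h').1
          have hp2'' : p2' ∈ F' (α i) := hii ▸ hp2'
          have hpp : p2' = p' := by
            by_contra hne
            exact (Finset.disjoint_left.mp ((hF'.1 (α i)).2.1 hp2'' hp' hne) hyp2') hyp'
          rw [hps, hpp]
    · -- one point in level 0, two in level 1
      have hs0c : s0.card = 1 := by rw [hs0card, h0]
      have hs1c : s1.card = 2 := by rw [hs1card, h1]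
      obtain ⟨x, hx⟩ := Finset.card_eq_one.mp hs0c
      have hxt : (x, (0 : ZMod 2)) ∈ t0 := hmem0 x (by rw [hx]; exact Finset.mem_singleton_self x)
      obtain ⟨j, hj, hju⟩ := hF'.2 s1 hs1c
      set i := α.symm j with hidef
      have hαi : α i = j := Equiv.apply_symm_apply α j
      obtain ⟨p, hp, hxp⟩ := (hF.1 i).2.2 x
      refine ⟨_, ⟨Or.inr (Or.inr ⟨i, p, hp, s1, (by rw [hαi]; exact hj), rfl⟩), ?_⟩, ?_⟩
      · intro z hz
        rcases hsplit z hz with h' | h'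
        · refine Finset.mem_union_left _ (mem_img.mpr ⟨?_, hc0 z h'⟩)
          have hz1 : z.1 ∈ s0 := Finset.mem_image_of_mem _ h'
          rw [hx, Finset.mem_singleton] at hz1
          rw [hz1]; exact hxp
        · exact Finset.mem_union_right _
            (mem_img.mpr ⟨Finset.mem_image_of_mem _ h', hc1 z h'⟩)
      · rintro q' ⟨hq', hsub⟩
        rcases hq' with ⟨b2, hb2, rfl⟩ | ⟨b2, hb2, rfl⟩ | ⟨i2, p2, hp2, p2', hp2', rfl⟩
        · exfalso
          obtain ⟨z, hz1⟩ := Finset.card_pos.mp (by omega : 0 < t1.card)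
          exact absurd ((mem_img.mp (hsub (ht1t hz1))).2.symm.trans (hc1 z hz1)) zmod2_ne
        · exact absurd (mem_img.mp (hsub (ht0t hxt))).2 zmod2_ne
        · have hsp : s1 ⊆ p2' := by
            intro y hy'
            rcases Finset.mem_union.mp (hsub (ht1t (hmem1 y hy'))) with h' | h'
            · exact absurd ((mem_img.mp h').2).symm zmod2_ne
            · exact (mem_img.mp h').1
          have hp2c : p2'.card = 2 := (hF'.1 (α i2)).1 p2' hp2'
          have hps : p2' = s1 := (Finset.eq_of_subset_of_card_le hsp (by omega)).symm
          have hj2 : s1 ∈ F' (α i2) := hps ▸ hp2'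
          have hjj : α i2 = j := hju (α i2) hj2
          have hii : i2 = i := by
            rw [hidef, ← hjj, Equiv.symm_apply_apply]
          have hxp2 : x ∈ p2 := by
            rcases Finset.mem_union.mp (hsub (ht0t hxt)) with h' | h'
            · exact (mem_img.mp h').1
            · exact absurd (mem_img.mp h').2 zmod2_ne
          have hp2'' : p2 ∈ F i := hii ▸ hp2
          have hpp : p2 = p := by
            by_contra hne
            exact (Finset.disjoint_left.mp ((hF.1 i).2.1 hp2'' hp hne) hxp2) hxp
          rw [hps, hpp]
    · -- all three points in level 1
      have hall1 : ∀ z ∈ t, z.2 = 1 := by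
        intro z hz
        rcases hsplit z hz with h | h
        · exact absurd h (by simp [Finset.card_eq_zero.mp h0])
        · exact hc1 z h
      have ht1eq : t1 = t := Finset.filter_eq_self.mpr hall1
      obtain ⟨b, ⟨hbB, hbs⟩, hbu⟩ := hB.2 s1 (by rw [hs1card, h1])
      refine ⟨b.image (fun x => (x, (1 : ZMod 2))),
        ⟨Or.inr (Or.inl ⟨b, hbB, rfl⟩), ?_⟩, ?_⟩
      · intro z hz
        refine mem_img.mpr ⟨hbs ?_, hall1 z hz⟩
        exact Finset.mem_image_of_mem _ (ht1eq ▸ hz)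
      · rintro q' ⟨hq', hsub⟩
        obtain ⟨z, hz⟩ := Finset.card_pos.mp (by omega : 0 < t.card)
        rcases hq' with ⟨b2, hb2, rfl⟩ | ⟨b2, hb2, rfl⟩ | ⟨i, p, hp, p', hp', rfl⟩
        · exact absurd ((mem_img.mp (hsub hz)).2.symm.trans (hall1 z hz)) zmod2_ne
        · have hsb2 : s1 ⊆ b2 := by
            intro x hx
            exact (mem_img.mp (hsub (ht1t (hmem1 x hx)))).1
          rw [hbu b2 ⟨hb2, hsb2⟩]
        · exfalso
          have hsp : s1 ⊆ p' := by
            intro x hx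
            rcases Finset.mem_union.mp (hsub (ht1t (hmem1 x hx))) with h' | h'
            · exact absurd ((mem_img.mp h').2).symm zmod2_ne
            · exact (mem_img.mp h').1
          have hle := Finset.card_le_card hsp
          have hp2 := (hF'.1 (α i)).1 p' hp'
          omega
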